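/- Fix n, k ∈ ℕ with n, k ≥ 1, γ ∈ (0,1), and inputs x_1, …, x_n ∈ [0,1]. For each i let x̄_i = ⌊x_i k⌋ + Ber(x_i k - ⌊x_i k⌋) (randomized rounding), let b_i ~ Ber(γ), let U_i be uniform on {0,1,…,k}, all mutually independent, and let y_i = x̄_i if b_i = 0 and y_i = U_i if b_i = 1. Define the estimator z = ((1/k)·Σ_{i=1}^n y_i − γn/2)/(1−γ). Then z is unbiased, i.e. E[z] = Σ_{i=1}^n x_i, and its mean squared error satisfies E[(z − Σ_{i=1}^n x_i)²] ≤ (n/(1−γ)²)·(1/(4k²) + γ/2). -/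

import Mathlib

open MeasureTheory ProbabilityTheory
open scoped ENNReal

section helpers

variable {Ω : Type*} [MeasurableSpace Ω] (μ : Measure Ω) [IsProbabilityMeasure μ]

lemma natrv_ae_mem (T : Ω → ℕ) (hT : Measurable T) (S : Finset ℕ)
    (h : ∑ j ∈ S, μ {ω | T ω = j} = 1) : ∀ᵐ ω ∂μ, T ω ∈ S := by
  have hU : {ω | T ω ∈ S} = ⋃ j ∈ S, {ω | T ω = j} := by ext ω; simp
  have hA : MeasurableSet {ω | T ω ∈ S} := by
    rw [hU]
    exact S.measurableSet_biUnion (fun j _ => hT (measurableSet_singleton j))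
  have hmeas : μ {ω | T ω ∈ S} = 1 := by
    have hd : Set.PairwiseDisjoint (↑S) (fun j => {ω | T ω = j}) := by
      intro a _ b _ hab
      simp only [Function.onFun, Set.disjoint_left, Set.mem_setOf_eq]
      intro ω h1 h2
      exact hab (h1.symm.trans h2)
    rw [hU, measure_biUnion_finset hd (fun j _ => hT (measurableSet_singleton j)), h]
  rw [ae_iff]
  have h2 : {ω | ¬ T ω ∈ S} = {ω | T ω ∈ S}ᶜ := rfl
  rw [h2, measure_compl hA (measure_ne_top μ _), measure_univ, hmeas, tsub_self]

lemma natrv_integral (T : Ω → ℕ) (hT : Measurable T) (S : Finset ℕ)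
    (hS : ∀ᵐ ω ∂μ, T ω ∈ S) (f : ℕ → ℝ) :
    Integrable (fun ω => f (T ω)) μ ∧
      ∫ ω, f (T ω) ∂μ = ∑ j ∈ S, f j * (μ {ω | T ω = j}).toReal := by
  have hmj : ∀ j : ℕ, MeasurableSet {ω | T ω = j} :=
    fun j => hT (measurableSet_singleton j)
  set g : Ω → ℝ := fun ω => ∑ j ∈ S, Set.indicator {ω | T ω = j} (fun _ => f j) ω with hg
  have hintj : ∀ j ∈ S, Integrable (fun ω => Set.indicator {ω | T ω = j} (fun _ => f j) ω) μ :=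
    fun j _ => (integrable_const (f j)).indicator (hmj j)
  have hgint : Integrable g μ := integrable_finset_sum _ hintj
  have heq : (fun ω => f (T ω)) =ᵐ[μ] g := by
    filter_upwards [hS] with ω hω
    rw [hg]
    simp only
    rw [Finset.sum_eq_single_of_mem (T ω) hω]
    · simp [Set.indicator_of_mem, Set.mem_setOf_eq]
    · intro j _ hj
      apply Set.indicator_of_notMem
      simp only [Set.mem_setOf_eq]
      exact fun h => hj (h ▸ rfl)
  constructor
  · exact hgint.congr heq.symm
  · rw [integral_congr_ae heq, hg, integral_finset_sum _ hintj]
    refine Finset.sum_congr rfl fun j _ => ?_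
    rw [integral_indicator_const (f j) (hmj j), smul_eq_mul, mul_comm, measureReal_def]

lemma sumid (k : ℕ) : ∑ j ∈ Finset.range (k+1), (j:ℝ) = k*(k+1)/2 := by
  induction k with
  | zero => simp
  | succ k ih => rw [Finset.sum_range_succ, ih]; push_cast; ring

lemma sumsq (k : ℕ) : ∑ j ∈ Finset.range (k+1), (j:ℝ)^2 = k*(k+1)*(2*k+1)/6 := by
  induction k with
  | zero => simp
  | succ k ih => rw [Finset.sum_range_succ, ih]; push_cast; ring

lemma varb (γ K M P : ℝ) (hγ0 : 0 < γ) (hγ1 : γ < 1) (hK : 1 ≤ K) (hM : 0 ≤ M)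
    (hP0 : 0 ≤ P) (hP1 : P ≤ 1) (hMP : M + P ≤ K) :
    (1-γ)*(M^2+P*(2*M+1)) + γ*(K*(2*K+1)/6) - ((1-γ)*(M+P)+γ*(K/2))^2
      ≤ 1/4 + γ*K^2/2 := by
  nlinarith [sq_nonneg (2*P-1), mul_nonneg hγ0.le (mul_nonneg hP0 (by linarith : (0:ℝ) ≤ 1 - P)),
    mul_nonneg hγ0.le (mul_nonneg (by linarith : (0:ℝ) ≤ K) (by linarith : (0:ℝ) ≤ K - 1)),
    sq_nonneg (γ*K), mul_nonneg (mul_nonneg hγ0.le (by linarith : (0:ℝ) ≤ 1 - γ))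
      (mul_nonneg (by linarith : (0:ℝ) ≤ M + P) (by linarith : (0:ℝ) ≤ K - (M+P))),
    mul_nonneg (by linarith : (0:ℝ) ≤ 1 - γ) (sq_nonneg (2*P-1))]

end helpers

theorem stmt2 {Ω : Type*} [MeasurableSpace Ω] (μ : Measure Ω) [IsProbabilityMeasure μ]
    (n k : ℕ) (hn : 1 ≤ n) (hk : 1 ≤ k) (γ : ℝ) (hγ : γ ∈ Set.Ioo (0:ℝ) 1)
    (x : Fin n → ℝ) (hx : ∀ i, x i ∈ Set.Icc (0:ℝ) 1)
    (Xr B U : Fin n → Ω → ℕ)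
    (hXrmeas : ∀ i, Measurable (Xr i)) (hBmeas : ∀ i, Measurable (B i))
    (hUmeas : ∀ i, Measurable (U i))
    (hXr1 : ∀ i, μ {ω | Xr i ω = ⌊x i * k⌋₊ + 1}
      = ENNReal.ofReal (x i * k - ⌊x i * k⌋₊))
    (hXr0 : ∀ i, μ {ω | Xr i ω = ⌊x i * k⌋₊}
      = ENNReal.ofReal (1 - (x i * k - ⌊x i * k⌋₊)))
    (hB1 : ∀ i, μ {ω | B i ω = 1} = ENNReal.ofReal γ)
    (hB0 : ∀ i, μ {ω | B i ω = 0} = ENNReal.ofReal (1 - γ))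
    (hU : ∀ i, ∀ j ≤ k, μ {ω | U i ω = j} = ((k : ℝ≥0∞) + 1)⁻¹)
    (hindep : iIndepFun
      (fun p : Fin n × Fin 3 => ![Xr p.1, B p.1, U p.1] p.2) μ)
    (y : Fin n → Ω → ℕ) (hy : ∀ i ω, y i ω = if B i ω = 0 then Xr i ω else U i ω)
    (z : Ω → ℝ)
    (hz : ∀ ω, z ω = ((1 / k) * ∑ i, (y i ω : ℝ) - γ * n / 2) / (1 - γ)) :
    (∫ ω, z ω ∂μ = ∑ i, x i) ∧
      ∫ ω, (z ω - ∑ i, x i) ^ 2 ∂μ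
        ≤ ((n : ℝ) / (1 - γ) ^ 2) * (1 / (4 * k ^ 2) + γ / 2) := by
  obtain ⟨hγ0, hγ1⟩ := hγ
  have hγ1' : (0:ℝ) < 1 - γ := by linarith
  have hk0 : (0:ℝ) < k := by exact_mod_cast hk
  have hk0' : (k:ℝ) ≠ 0 := ne_of_gt hk0
  have hk1' : (k:ℝ) + 1 ≠ 0 := by positivity
  set m : Fin n → ℕ := fun i => ⌊x i * k⌋₊ with hm
  set p : Fin n → ℝ := fun i => x i * k - m i with hpdef
  have hxk0 : ∀ i, 0 ≤ x i * k := fun i => mul_nonneg (hx i).1 hk0.le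
  have hxkk : ∀ i, x i * k ≤ k := fun i => by
    have := (hx i).2; nlinarith
  have hp0 : ∀ i, 0 ≤ p i := fun i => by
    have := Nat.floor_le (hxk0 i); simpa [hpdef, hm] using this
  have hp1 : ∀ i, p i ≤ 1 := fun i => by
    have := (Nat.lt_floor_add_one (x i * k)).le
    simp only [hpdef, hm]; push_cast at this ⊢; linarith
  have hmk : ∀ i, m i ≤ k := fun i => by
    have : (⌊x i * k⌋₊ : ℝ) ≤ k := (Nat.floor_le (hxk0 i)).trans (hxkk i)
    exact_mod_cast this
  have hmxp : ∀ i, (m i : ℝ) + p i = x i * k := fun i => by simp [hpdef]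
  -- a.e. membership
  have haeB : ∀ i, ∀ᵐ ω ∂μ, B i ω ∈ ({0, 1} : Finset ℕ) := by
    intro i
    refine natrv_ae_mem μ (B i) (hBmeas i) _ ?_
    rw [Finset.sum_insert (by simp), Finset.sum_singleton, hB0 i, hB1 i,
      ← ENNReal.ofReal_add (by linarith) hγ0.le]
    norm_num
  have haeXr : ∀ i, ∀ᵐ ω ∂μ, Xr i ω ∈ ({m i, m i + 1} : Finset ℕ) := by
    intro i
    refine natrv_ae_mem μ (Xr i) (hXrmeas i) _ ?_
    rw [Finset.sum_insert (by simp), Finset.sum_singleton, hXr0 i, hXr1 i,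
      ← ENNReal.ofReal_add (by have := hp1 i; simp only [hpdef, hm] at this ⊢; linarith)
        (by have := hp0 i; simpa [hpdef, hm] using this)]
    norm_num
  have haeU : ∀ i, ∀ᵐ ω ∂μ, U i ω ∈ Finset.range (k+1) := by
    intro i
    refine natrv_ae_mem μ (U i) (hUmeas i) _ ?_
    have : ∀ j ∈ Finset.range (k+1), μ {ω | U i ω = j} = ((k : ℝ≥0∞) + 1)⁻¹ := by
      intro j hj
      exact hU i j (Nat.lt_succ_iff.mp (Finset.mem_range.mp hj))
    rw [Finset.sum_congr rfl this, Finset.sum_const, Finset.card_range, nsmul_eq_mul]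
    push_cast
    exact ENNReal.mul_inv_cancel (by simp) (by simp)
  have hymeas : ∀ i, Measurable (y i) := by
    intro i
    have hyf : y i = fun ω => if B i ω = 0 then Xr i ω else U i ω := funext (hy i)
    rw [hyf]
    exact Measurable.ite (hBmeas i (measurableSet_singleton 0)) (hXrmeas i) (hUmeas i)
  have haey : ∀ i, ∀ᵐ ω ∂μ, y i ω ∈ Finset.range (k+2) := by
    intro i
    filter_upwards [haeB i, haeXr i, haeU i] with ω hBω hXω hUω
    rw [hy i ω]
    have hmki := hmk i
    simp only [Finset.mem_insert, Finset.mem_singleton, Finset.mem_range] at hBω hXω hUω ⊢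
    split <;> omega
  -- independence of pairs within a single user
  have hIXB : ∀ i, IndepFun (Xr i) (B i) μ := by
    intro i
    have h := hindep.indepFun (show ((i, 0) : Fin n × Fin 3) ≠ (i, 1) by simp)
    simpa using h
  have hIUB : ∀ i, IndepFun (U i) (B i) μ := by
    intro i
    have h := hindep.indepFun (show ((i, 2) : Fin n × Fin 3) ≠ (i, 1) by simp)
    simpa using h
  -- key mixture formula
  have key : ∀ (i : Fin n) (f : ℕ → ℝ),
      Integrable (fun ω => f (y i ω)) μ ∧
      ∫ ω, f (y i ω) ∂μ =
        (1 - γ) * (f (m i) * (1 - p i) + f (m i + 1) * p i) +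
          γ * ((∑ j ∈ Finset.range (k+1), f j) / (k+1)) := by
    intro i f
    -- distribution integrals
    have hEXr := natrv_integral μ (Xr i) (hXrmeas i) _ (haeXr i) f
    have hEU := natrv_integral μ (U i) (hUmeas i) _ (haeU i) f
    have hXrval : ∫ ω, f (Xr i ω) ∂μ = f (m i) * (1 - p i) + f (m i + 1) * p i := by
      rw [hEXr.2, Finset.sum_insert (by simp), Finset.sum_singleton, hXr0 i, hXr1 i,
        ENNReal.toReal_ofReal (by have := hp1 i; simp only [hpdef, hm] at this ⊢; linarith),
        ENNReal.toReal_ofReal (by have := hp0 i; simpa [hpdef, hm] using this)]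
    have hUval : ∫ ω, f (U i ω) ∂μ = (∑ j ∈ Finset.range (k+1), f j) / (k+1) := by
      rw [hEU.2]
      have : ∀ j ∈ Finset.range (k+1),
          f j * (μ {ω | U i ω = j}).toReal = f j * ((k:ℝ)+1)⁻¹ := by
        intro j hj
        rw [hU i j (Nat.lt_succ_iff.mp (Finset.mem_range.mp hj))]
        rw [ENNReal.toReal_inv, ENNReal.toReal_add (by simp) (by simp)]
        simp
      rw [Finset.sum_congr rfl this, ← Finset.sum_mul, div_eq_mul_inv]
    -- indicator functions of the coin
    set g0 : ℕ → ℝ := fun t => if t = 0 then 1 else 0 with hg0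
    set g1 : ℕ → ℝ := fun t => if t = 1 then 1 else 0 with hg1
    have hEg0 := natrv_integral μ (B i) (hBmeas i) _ (haeB i) g0
    have hEg1 := natrv_integral μ (B i) (hBmeas i) _ (haeB i) g1
    have hg0val : ∫ ω, g0 (B i ω) ∂μ = 1 - γ := by
      rw [hEg0.2, Finset.sum_insert (by simp), Finset.sum_singleton, hB0 i, hB1 i,
        ENNReal.toReal_ofReal (by linarith), ENNReal.toReal_ofReal hγ0.le]
      simp [hg0]
    have hg1val : ∫ ω, g1 (B i ω) ∂μ = γ := by
      rw [hEg1.2, Finset.sum_insert (by simp), Finset.sum_singleton, hB0 i, hB1 i,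
        ENNReal.toReal_ofReal (by linarith), ENNReal.toReal_ofReal hγ0.le]
      simp [hg1]
    -- independence of composed functions
    have hIX : IndepFun (fun ω => f (Xr i ω)) (fun ω => g0 (B i ω)) μ :=
      (hIXB i).comp (measurable_from_nat (f := f)) (measurable_from_nat (f := g0))
    have hIU : IndepFun (fun ω => f (U i ω)) (fun ω => g1 (B i ω)) μ :=
      (hIUB i).comp (measurable_from_nat (f := f)) (measurable_from_nat (f := g1))
    have hint1 : Integrable (fun ω => f (Xr i ω) * g0 (B i ω)) μ :=
      hIX.integrable_mul hEXr.1 hEg0.1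
    have hint2 : Integrable (fun ω => f (U i ω) * g1 (B i ω)) μ :=
      hIU.integrable_mul hEU.1 hEg1.1
    have heq : (fun ω => f (y i ω)) =ᵐ[μ]
        fun ω => f (Xr i ω) * g0 (B i ω) + f (U i ω) * g1 (B i ω) := by
      filter_upwards [haeB i] with ω hBω
      simp only [Finset.mem_insert, Finset.mem_singleton] at hBω
      rw [hy i ω]
      rcases hBω with h0 | h1
      · simp [h0, hg0, hg1]
      · simp [h1, hg0, hg1]
    constructor
    · exact (hint1.add hint2).congr heq.symm
    · have hm1 := hIX.integral_mul_eq_mul_integral hEXr.1.aestronglyMeasurable hEg0.1.aestronglyMeasurable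
      have hm2 := hIU.integral_mul_eq_mul_integral hEU.1.aestronglyMeasurable hEg1.1.aestronglyMeasurable
      rw [integral_congr_ae heq, integral_add hint1 hint2,
        show ∫ ω, f (Xr i ω) * g0 (B i ω) ∂μ
          = integral μ ((fun ω => f (Xr i ω)) * fun ω => g0 (B i ω)) from rfl, hm1,
        show ∫ ω, f (U i ω) * g1 (B i ω) ∂μ
          = integral μ ((fun ω => f (U i ω)) * fun ω => g1 (B i ω)) from rfl, hm2,
        hXrval, hUval, hg0val, hg1val]
      ring
  -- expectations of y and y²
  set a : Fin n → ℝ := fun i => (1 - γ) * (x i * k) + γ * (k / 2) with ha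
  have hEY : ∀ i, ∫ ω, ((y i ω : ℝ)) ∂μ = a i := by
    intro i
    rw [(key i (fun j => (j : ℝ))).2]
    have h1 : ((m i : ℝ)) * (1 - p i) + ((m i : ℝ) + 1) * p i = x i * k := by
      have := hmxp i; push_cast; nlinarith [hmxp i]
    have h2 : (∑ j ∈ Finset.range (k+1), (j:ℝ)) / (k+1) = k / 2 := by
      rw [sumid]; field_simp
    push_cast
    rw [h2]
    simp only [ha]
    nlinarith [hmxp i]
  have hEY2 : ∀ i, ∫ ω, ((y i ω : ℝ))^2 ∂μ =
      (1 - γ) * ((m i:ℝ)^2 + p i * (2 * m i + 1)) + γ * (k * (2*k+1) / 6) := by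
    intro i
    rw [(key i (fun j => (j : ℝ)^2)).2]
    have h2 : (∑ j ∈ Finset.range (k+1), (j:ℝ)^2) / (k+1) = k * (2*k+1) / 6 := by
      rw [sumsq]; field_simp
    push_cast
    rw [h2]
    ring
  have hIntY : ∀ i, Integrable (fun ω => ((y i ω : ℝ))) μ :=
    fun i => (key i (fun j => (j : ℝ))).1
  have hIntY2 : ∀ i, Integrable (fun ω => ((y i ω : ℝ))^2) μ :=
    fun i => (key i (fun j => (j : ℝ)^2)).1
  -- the centered variables
  set W : Fin n → Ω → ℝ := fun i ω => ((y i ω : ℝ) - a i) / k with hW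
  have hIntW : ∀ i, Integrable (W i) μ := by
    intro i
    have := (key i (fun j => ((j : ℝ) - a i) / k)).1
    exact this
  have hIntW2 : ∀ i, Integrable (fun ω => (W i ω)^2) μ := by
    intro i
    have := (key i (fun j => (((j : ℝ) - a i) / k)^2)).1
    exact this
  have hEW : ∀ i, ∫ ω, W i ω ∂μ = 0 := by
    intro i
    have hWeq : W i = fun ω => (1/(k:ℝ)) * ((y i ω : ℝ)) - a i / k := by
      funext ω; simp only [hW]; ring
    rw [hWeq, integral_sub ((hIntY i).const_mul _) (integrable_const _),
      integral_const_mul, hEY i, integral_const]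
    simp only [measure_univ, probReal_univ, ENNReal.toReal_one, one_smul, smul_eq_mul]
    ring
  have hEW2 : ∀ i, ∫ ω, (W i ω)^2 ∂μ =
      ((∫ ω, ((y i ω : ℝ))^2 ∂μ) - (a i)^2) / k^2 := by
    intro i
    have hWeq : (fun ω => (W i ω)^2) = fun ω =>
        (1/(k:ℝ)^2) * ((y i ω : ℝ))^2 - (2 * a i / k^2) * ((y i ω : ℝ)) + (a i)^2 / k^2 := by
      funext ω; simp only [hW]; field_simp; ring
    have hint1 : Integrable (fun ω => (1/(k:ℝ)^2) * ((y i ω : ℝ))^2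
        - (2 * a i / (k:ℝ)^2) * ((y i ω : ℝ))) μ :=
      ((hIntY2 i).const_mul _).sub ((hIntY i).const_mul _)
    rw [hWeq, integral_add hint1 (integrable_const _),
      integral_sub ((hIntY2 i).const_mul _) ((hIntY i).const_mul _),
      integral_const_mul, integral_const_mul, hEY i, integral_const]
    simp only [measure_univ, probReal_univ, ENNReal.toReal_one, one_smul, smul_eq_mul]
    field_simp
    ring
  -- variance bound
  have hvarb : ∀ i, ∫ ω, (W i ω)^2 ∂μ ≤ 1 / (4 * k^2) + γ / 2 := by
    intro i
    have h3 := hmxp i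
    have key2 := varb γ k (m i) (p i) hγ0 hγ1 (by exact_mod_cast hk) (Nat.cast_nonneg _)
      (hp0 i) (hp1 i) (by rw [h3]; exact hxkk i)
    rw [hEW2 i, hEY2 i, div_le_iff₀ (by positivity : (0:ℝ) < (k:ℝ)^2)]
    simp only [ha]
    rw [← h3]
    have hrhs : (1/(4*(k:ℝ)^2) + γ/2) * (k:ℝ)^2 = 1/4 + γ*(k:ℝ)^2/2 := by
      field_simp
    rw [hrhs]
    nlinarith [key2]
  -- independence of W i and W j for i ≠ j
  have hFmeas : ∀ q : Fin n × Fin 3, Measurable (![Xr q.1, B q.1, U q.1] q.2) := by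
    rintro ⟨i, b⟩
    fin_cases b
    · simpa using hXrmeas i
    · simpa using hBmeas i
    · simpa using hUmeas i
  have hIWW : ∀ i j : Fin n, i ≠ j → IndepFun (W i) (W j) μ := by
    intro i j hij
    classical
    have hdisj : Disjoint ({(i,0),(i,1),(i,2)} : Finset (Fin n × Fin 3))
        ({(j,0),(j,1),(j,2)} : Finset (Fin n × Fin 3)) := by
      simp only [Finset.disjoint_left, Finset.mem_insert, Finset.mem_singleton]
      rintro ⟨c, d⟩ hc hd
      rcases hc with h|h|h <;> rcases hd with h'|h'|h' <;>
        · rw [Prod.ext_iff] at h h'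
          exact hij (h.1.symm.trans h'.1)
    have h := hindep.indepFun_finset _ _ hdisj hFmeas
    have mkφ : ∀ c : Fin n, ∃ φ : (({(c,0),(c,1),(c,2)} : Finset (Fin n × Fin 3)) → ℕ) → ℝ,
        Measurable φ ∧ W c = φ ∘ (fun ω (s : ({(c,0),(c,1),(c,2)} : Finset (Fin n × Fin 3))) =>
          ![Xr (s : Fin n × Fin 3).1, B (s : Fin n × Fin 3).1, U (s : Fin n × Fin 3).1]
            (s : Fin n × Fin 3).2 ω) := by
      intro c
      refine ⟨fun v => (((if v ⟨(c,1), by simp⟩ = 0 then v ⟨(c,0), by simp⟩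
          else v ⟨(c,2), by simp⟩ : ℕ) : ℝ) - a c) / k, ?_, ?_⟩
      · apply Measurable.div_const
        apply Measurable.sub _ measurable_const
        apply Measurable.comp (measurable_from_nat (f := fun t : ℕ => (t : ℝ)))
        have hset : MeasurableSet {v : (({(c,0),(c,1),(c,2)} : Finset (Fin n × Fin 3)) → ℕ) |
            v ⟨(c,1), by simp⟩ = 0} :=
          (measurable_pi_apply _) (measurableSet_singleton 0)
        exact Measurable.ite hset (measurable_pi_apply _) (measurable_pi_apply _)
      · funext ω
        simp only [hW, Function.comp_apply, Matrix.cons_val_zero, Matrix.cons_val_one,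
          Matrix.head_cons, Matrix.cons_val_two, Matrix.vecHead, Matrix.vecTail,
          Matrix.cons_val_succ]
        rw [hy c ω]
    obtain ⟨φi, hφi, hWi⟩ := mkφ i
    obtain ⟨φj, hφj, hWj⟩ := mkφ j
    rw [hWi, hWj]
    exact h.comp hφi hφj
  have hcross : ∀ i j : Fin n, i ≠ j → ∫ ω, W i ω * W j ω ∂μ = 0 := by
    intro i j hij
    have hm := (hIWW i j hij).integral_mul_eq_mul_integral (hIntW i).aestronglyMeasurable (hIntW j).aestronglyMeasurable
    rw [show ∫ ω, W i ω * W j ω ∂μ = integral μ (W i * W j) from rfl, hm,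
      hEW i, hEW j, mul_zero]
  have hprodint : ∀ i j : Fin n, Integrable (fun ω => W i ω * W j ω) μ := by
    intro i j
    by_cases hij : i = j
    · subst hij
      have := hIntW2 i
      simpa [pow_two] using this
    · exact (hIWW i j hij).integrable_mul (hIntW i) (hIntW j)
  have hexp : ∫ ω, (∑ i, W i ω)^2 ∂μ = ∑ i, ∫ ω, (W i ω)^2 ∂μ := by
    have h1 : (fun ω => (∑ i, W i ω)^2) = fun ω => ∑ i : Fin n, ∑ j : Fin n, W i ω * W j ω := by
      funext ω
      rw [sq, Finset.sum_mul_sum]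
    rw [h1, integral_finset_sum _ fun i _ => integrable_finset_sum _ fun j _ => hprodint i j]
    refine Finset.sum_congr rfl fun i _ => ?_
    rw [integral_finset_sum _ fun j _ => hprodint i j,
      Finset.sum_eq_single i (fun j _ hji => hcross i j (Ne.symm hji)) (by simp)]
    simp [pow_two]
  -- relating z to the W's
  have hsa : ∑ i, a i = (1 - γ) * (∑ i, x i) * k + n * (γ * (k/2)) := by
    simp only [ha]
    rw [Finset.sum_add_distrib, Finset.sum_const, Finset.card_univ, Fintype.card_fin,
      nsmul_eq_mul, ← Finset.mul_sum, ← Finset.sum_mul]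
    ring
  have hzW : ∀ ω, z ω - ∑ i, x i = (∑ i, W i ω) / (1 - γ) := by
    intro ω
    have hsw : ∑ i, W i ω = ((∑ i, (y i ω : ℝ)) - ∑ i, a i) / k := by
      simp only [hW]
      rw [← Finset.sum_div, Finset.sum_sub_distrib]
    rw [hz ω, hsw, hsa]
    field_simp
    ring
  have hIntWsum : Integrable (fun ω => ∑ i, W i ω) μ :=
    integrable_finset_sum _ fun i _ => hIntW i
  constructor
  · have hzeq : z = fun ω => (∑ i, W i ω) / (1 - γ) + ∑ i, x i := by
      funext ω
      have := hzW ω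
      linarith
    rw [hzeq, integral_add (hIntWsum.div_const _) (integrable_const _), integral_div,
      integral_finset_sum _ fun i _ => hIntW i]
    simp [hEW]
  · have hzeq2 : (fun ω => (z ω - ∑ i, x i)^2) = fun ω => (∑ i, W i ω)^2 / (1 - γ)^2 := by
      funext ω
      rw [hzW ω, div_pow]
    rw [hzeq2, integral_div, hexp]
    have hb : ∑ i, ∫ ω, (W i ω)^2 ∂μ ≤ n * (1/(4*(k:ℝ)^2) + γ/2) := by
      calc ∑ i, ∫ ω, (W i ω)^2 ∂μ ≤ ∑ _i : Fin n, (1/(4*(k:ℝ)^2) + γ/2) :=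
            Finset.sum_le_sum fun i _ => hvarb i
        _ = n * (1/(4*(k:ℝ)^2) + γ/2) := by
            rw [Finset.sum_const, Finset.card_univ, Fintype.card_fin, nsmul_eq_mul]
    calc (∑ i, ∫ ω, (W i ω)^2 ∂μ) / (1-γ)^2 ≤ (n * (1/(4*(k:ℝ)^2) + γ/2)) / (1-γ)^2 := by
          gcongr
      _ = ((n : ℝ) / (1 - γ) ^ 2) * (1 / (4 * k ^ 2) + γ / 2) := by ring
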